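/- Let K be a subfield of ℝ that is finite-dimensional over ℚ, and let m be an odd positive integer. Then there exists a subfield F of ℝ containing K with [F : K] = m. -/

import Mathlib

set_option synthInstance.maxHeartbeats 1000000

open Polynomial IntermediateField

/-- A rational whose `ℓ2`-adic valuation is `1` is not a `p`-th power. -/
lemma aux_not_pow (p ℓ1 ℓ2 : ℕ) (hp : p.Prime) (h1 : ℓ1.Prime) (h2 : ℓ2.Prime)
    (hne : ℓ1 ≠ ℓ2) (k : ℕ) : ∀ b : ℚ, b ^ p ≠ (ℓ2 : ℚ) * (ℓ1 : ℚ) ^ k := by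
  intro b hb
  haveI : Fact ℓ2.Prime := ⟨h2⟩
  have hℓ1 : (ℓ1 : ℚ) ≠ 0 := Nat.cast_ne_zero.mpr h1.ne_zero
  have hℓ2 : (ℓ2 : ℚ) ≠ 0 := Nat.cast_ne_zero.mpr h2.ne_zero
  have hb0 : b ≠ 0 := by
    intro h
    rw [h, zero_pow hp.ne_zero] at hb
    exact (mul_ne_zero hℓ2 (pow_ne_zero _ hℓ1)) hb.symm
  have hv := congrArg (padicValRat ℓ2) hb
  rw [padicValRat.pow b, padicValRat.mul hℓ2 (pow_ne_zero _ hℓ1),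
    padicValRat.pow (q := (ℓ1 : ℚ))] at hv
  have v1 : padicValRat ℓ2 (ℓ2 : ℚ) = 1 := padicValRat.self h2.one_lt
  have v2 : padicValRat ℓ2 (ℓ1 : ℚ) = 0 := by
    rw [padicValRat.of_nat]
    norm_cast
    exact padicValNat.eq_zero_of_not_dvd
      (fun h => hne ((Nat.prime_dvd_prime_iff_eq h2 h1).mp h).symm)
  rw [v1, v2, mul_zero, add_zero] at hv
  have hdvd : (p : ℤ) ∣ 1 := ⟨padicValRat ℓ2 b, hv.symm⟩
  have := Int.eq_one_of_dvd_one (by positivity) hdvd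
  exact_mod_cast hp.one_lt.ne' (by exact_mod_cast this)

lemma aux_minpoly {F E : Type*} [Field F] [Field E] [Algebra F E]
    (p : ℕ) (hp : p.Prime) (hpodd : Odd p)
    (c : F) (hc : ∀ b : F, b ^ p ≠ c) (y : E) (hy : y ^ p = algebraMap F E c) :
    minpoly F y = X ^ p - C c := by
  have irr : Irreducible (X ^ p - C c) := by
    apply X_pow_sub_C_irreducible_of_odd hpodd
    intro q hq hqp b
    rcases (Nat.prime_dvd_prime_iff_eq hq hp).mp hqp with rfl
    exact hc b
  refine (minpoly.eq_of_irreducible_of_monic irr ?_ (monic_X_pow_sub_C c hp.ne_zero)).symm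
  simp [hy]

lemma aux_trace_zero {F E : Type*} [Field F] [Field E] [Algebra F E] [FiniteDimensional F E]
    (p : ℕ) (hp : p.Prime) (hpodd : Odd p)
    (c : F) (hc : ∀ b : F, b ^ p ≠ c) (y : E) (hy : y ^ p = algebraMap F E c) :
    Algebra.trace F E y = 0 := by
  have hmin := aux_minpoly p hp hpodd c hc y hy
  have hyint : IsIntegral F y :=
    ⟨X ^ p - C c, monic_X_pow_sub_C c hp.ne_zero, by simp [hy]⟩
  rw [trace_eq_trace_adjoin F y]
  have hnc : (X ^ p - C c : F[X]).nextCoeff = 0 := by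
    have h2 := hp.two_le
    rw [nextCoeff_of_natDegree_pos (by rw [natDegree_X_pow_sub_C]; exact hp.pos),
      natDegree_X_pow_sub_C, coeff_sub, coeff_X_pow, coeff_C,
      if_neg (by omega), if_neg (by omega), sub_zero]
  rw [← IntermediateField.adjoin.powerBasis_gen hyint,
    PowerBasis.trace_gen_eq_nextCoeff_minpoly, IntermediateField.adjoin.powerBasis_gen hyint,
    ← minpoly.algebraMap_eq (algebraMap F⟮y⟯ E).injective,
    AdjoinSimple.algebraMap_gen, hmin, hnc, neg_zero, smul_zero]

lemma aux_fd {E : Type*} [AddCommGroup E] (i1 i2 : Module ℚ E)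
    (h : @FiniteDimensional ℚ E _ _ i1) : @FiniteDimensional ℚ E _ _ i2 := by
  rwa [Subsingleton.elim i2 i1]

/-- Key lemma: in a finite-dimensional `ℚ`-algebra generated (as a field) by `b1`,
two distinct primes cannot both have `p`-th roots. -/
lemma aux_key {E : Type*} [Field E] [Algebra ℚ E] [FiniteDimensional ℚ E]
    (p ℓ1 ℓ2 : ℕ) (hp : p.Prime) (hpodd : Odd p)
    (h1 : ℓ1.Prime) (h2 : ℓ2.Prime) (hne : ℓ1 ≠ ℓ2)
    (b1 b2 : E) (e1 : b1 ^ p = (ℓ1 : E)) (e2 : b2 ^ p = (ℓ2 : E))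
    (hgen : ∀ y : E, ∃ (f : Polynomial ℤ) (d : ℤ), d ≠ 0 ∧
      (d : E) * y = Polynomial.aeval b1 f) : False := by
  haveI : CharZero E := charZero_of_injective_algebraMap (algebraMap ℚ E).injective
  have hz : ∀ i : ℕ, Algebra.trace ℚ E (b2 * b1 ^ i) = 0 := by
    intro i
    apply aux_trace_zero p hp hpodd ((ℓ2 : ℚ) * (ℓ1 : ℚ) ^ i)
      (aux_not_pow p ℓ1 ℓ2 hp h1 h2 hne i)
    rw [mul_pow, e2, ← pow_mul, mul_comm i p, pow_mul, e1]
    simp [map_mul, map_pow]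
  have hb2 : ∀ y : E, Algebra.trace ℚ E (b2 * y) = 0 := by
    intro y
    obtain ⟨f, d, hd, hdy⟩ := hgen y
    have key : Algebra.trace ℚ E (b2 * ((d : E) * y)) = 0 := by
      rw [hdy, Polynomial.aeval_eq_sum_range, Finset.mul_sum]
      rw [map_sum]
      refine Finset.sum_eq_zero fun i _ => ?_
      rw [mul_smul_comm, map_zsmul, hz i, smul_zero]
    rw [show b2 * ((d : E) * y) = (d : ℚ) • (b2 * y) by
        rw [Algebra.smul_def, map_intCast]; ring] at key
    rw [LinearMap.map_smul, smul_eq_zero] at key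
    rcases key with h | h
    · exact absurd (by exact_mod_cast h) hd
    · exact h
  have hb20 : b2 = 0 := by
    refine (traceForm_nondegenerate ℚ E).1 b2 (fun y => ?_)
    rw [Algebra.traceForm_apply]
    exact hb2 y
  rw [hb20, zero_pow hp.ne_zero] at e2
  exact h2.ne_zero (by exact_mod_cast e2.symm)

/-- Clearing denominators of a rational polynomial. -/
lemma aux_int_poly (F : ℚ[X]) : ∃ (f : ℤ[X]) (d : ℤ), d ≠ 0 ∧
    C (d : ℚ) * F = f.map (Int.castRingHom ℚ) := by
  induction F using Polynomial.induction_on' with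
  | add P Q hP hQ =>
    obtain ⟨f1, d1, hd1, h1⟩ := hP
    obtain ⟨f2, d2, hd2, h2⟩ := hQ
    refine ⟨C d2 * f1 + C d1 * f2, d1 * d2, mul_ne_zero hd1 hd2, ?_⟩
    rw [Polynomial.map_add, Polynomial.map_mul, Polynomial.map_mul, ← h1, ← h2,
      map_C, map_C]
    simp only [Int.coe_castRingHom]
    push_cast
    rw [C_mul]
    ring
  | monomial n a =>
    refine ⟨monomial n a.num, (a.den : ℤ), by exact_mod_cast a.den_nz, ?_⟩
    have hden : ((a.den : ℚ)) * a = (a.num : ℚ) := by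
      rw [mul_comm, Rat.mul_den_eq_num]
    rw [map_monomial, C_mul_monomial]
    push_cast
    rw [hden]
    simp

/-- Fiber lemma: if two primes have `p`-th roots generating the same subfield,
they are equal. -/
lemma aux_fiber {L : Type*} [Field L] [Algebra ℚ L] [FiniteDimensional ℚ L]
    (p ℓ1 ℓ2 : ℕ) (hp : p.Prime) (hpodd : Odd p) (h1 : ℓ1.Prime) (h2 : ℓ2.Prime)
    (b1 b2 : L) (e1 : b1 ^ p = (ℓ1 : L)) (e2 : b2 ^ p = (ℓ2 : L))
    (hEq : ℚ⟮b2⟯ = ℚ⟮b1⟯) : ℓ1 = ℓ2 := by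
  by_contra hne
  have hb1m : b1 ∈ ℚ⟮b1⟯ := mem_adjoin_simple_self ℚ b1
  have hb2m : b2 ∈ ℚ⟮b1⟯ := hEq ▸ mem_adjoin_simple_self ℚ b2
  set E : IntermediateField ℚ L := ℚ⟮b1⟯ with hE
  set b1' : E := ⟨b1, hb1m⟩ with hb1'
  set b2' : E := ⟨b2, hb2m⟩ with hb2'
  letI instA : Algebra ℚ E := inferInstance
  haveI : @FiniteDimensional ℚ E _ _ instA.toModule :=
    aux_fd _ _ (IntermediateField.finiteDimensional_left E)
  have e1' : b1' ^ p = (ℓ1 : E) := by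
    apply Subtype.coe_injective
    push_cast [hb1']
    exact e1
  have e2' : b2' ^ p = (ℓ2 : E) := by
    apply Subtype.coe_injective
    push_cast [hb2']
    exact e2
  have hb1int : IsIntegral ℚ b1 := by
    refine ⟨X ^ p - C (ℓ1 : ℚ), monic_X_pow_sub_C _ hp.ne_zero, ?_⟩
    simp [e1]
  have hgen : ∀ y : E, ∃ (f : Polynomial ℤ) (d : ℤ), d ≠ 0 ∧
      (d : E) * y = Polynomial.aeval b1' f := by
    intro y
    have hy : (y : L) ∈ Algebra.adjoin ℚ {b1} := by
      rw [← adjoin_simple_toSubalgebra_of_isAlgebraic hb1int.isAlgebraic]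
      exact y.2
    rw [Algebra.adjoin_singleton_eq_range_aeval, AlgHom.mem_range] at hy
    obtain ⟨Fq, hFq⟩ := hy
    obtain ⟨f, d, hd, hCd⟩ := aux_int_poly Fq
    refine ⟨f, d, hd, ?_⟩
    apply Subtype.coe_injective
    have hcomm : ((Polynomial.aeval b1' f : E) : L) = Polynomial.aeval b1 f := by
      have := Polynomial.aeval_algHom_apply (IsScalarTower.toAlgHom ℤ E L) b1' f
      simpa using this.symm
    have hK : (d : L) * (y : L) = Polynomial.aeval b1 f := by
      have h3 := congrArg (Polynomial.aeval b1) hCd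
      rw [map_mul, aeval_C, hFq] at h3
      rw [show Polynomial.map (Int.castRingHom ℚ) f = Polynomial.map (algebraMap ℤ ℚ) f by
        rw [algebraMap_int_eq], Polynomial.aeval_map_algebraMap] at h3
      rw [← h3, map_intCast]
    push_cast
    rw [hK, hcomm]
  exact absurd (aux_key p ℓ1 ℓ2 hp hpodd h1 h2 hne b1' b2' e1' e2' hgen) not_false

set_option maxHeartbeats 2000000

/-- For any subfield `K` of `ℝ` that is finite-dimensional over `ℚ` and any odd positive
integer `m`, there is a subfield `F` of `ℝ` containing `K` with `[F : K] = m`. -/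
theorem exists_real_extension_of_odd_degree
    (K : Subfield ℝ) (hK : FiniteDimensional ℚ K) (m : ℕ) (hm : 0 < m) (hodd : Odd m) :
    ∃ (F : Subfield ℝ) (h : K ≤ F),
      (letI : Algebra K F := (Subfield.inclusion h).toAlgebra;
        Module.finrank K F) = m := by
  classical
  -- finitely many intermediate fields
  haveI hfinIF : Finite (IntermediateField ℚ K) :=
    Field.finite_intermediateField_of_exists_primitive_element ℚ K
      (Field.exists_primitive_element ℚ K)
  -- the set of bad primes
  set bad : Set ℕ := {ℓ : ℕ | ℓ.Prime ∧ ∃ p ∈ m.primeFactors, ∃ b : K, b ^ p = (ℓ : K)} with hbad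
  have hbadfin : bad.Finite := by
    have hsub : bad ⊆ ⋃ p ∈ m.primeFactors,
        {ℓ : ℕ | ℓ.Prime ∧ ∃ b : K, b ^ p = (ℓ : K)} := by
      rintro ℓ ⟨hℓ, p, hpm, b, hb⟩
      exact Set.mem_biUnion hpm ⟨hℓ, b, hb⟩
    refine Set.Finite.subset (Set.Finite.biUnion (m.primeFactors.finite_toSet) ?_) hsub
    intro p hpm
    obtain ⟨hp, hpdvd, -⟩ := Nat.mem_primeFactors.mp (by exact_mod_cast hpm)
    have hpodd : Odd p := by
      rcases hp.eq_two_or_odd' with rfl | h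
      · obtain ⟨t, ht⟩ := hpdvd
        obtain ⟨k, hk⟩ := hodd
        omega
      · exact h
    rw [← Set.finite_coe_iff]
    set S := {ℓ : ℕ | ℓ.Prime ∧ ∃ b : K, b ^ p = (ℓ : K)}
    refine Finite.of_injective
      (fun ℓ : S => (ℚ⟮(ℓ.2.2.choose : K)⟯ : IntermediateField ℚ K)) ?_
    rintro ⟨ℓ1, h1, hb1⟩ ⟨ℓ2, h2, hb2⟩ hEq
    simp only at hEq
    apply Subtype.ext
    exact (aux_fiber p ℓ1 ℓ2 hp hpodd h1 h2 _ _ hb1.choose_spec hb2.choose_spec hEq.symm)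
  -- choose a good prime
  obtain ⟨ℓ, hℓ⟩ := (Nat.infinite_setOf_prime.diff hbadfin).nonempty
  obtain ⟨hℓp, hℓbad⟩ := hℓ
  -- X^m - ℓ is irreducible over K
  have irr : Irreducible (X ^ m - C (ℓ : K)) := by
    apply X_pow_sub_C_irreducible_of_odd hodd
    intro p hp hpm b hb
    exact hℓbad ⟨hℓp, p, Nat.mem_primeFactors.mpr ⟨hp, hpm, hm.ne'⟩, b, hb⟩
  -- the real m-th root of ℓ
  set α : ℝ := (ℓ : ℝ) ^ ((m : ℝ)⁻¹) with hα
  have hαm : α ^ m = (ℓ : ℝ) := Real.rpow_inv_natCast_pow (by positivity) hm.ne'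
  have haev : Polynomial.aeval α (X ^ m - C (ℓ : K)) = 0 := by
    simp [hαm, map_natCast]
  have hmono : (X ^ m - C (ℓ : K)).Monic := monic_X_pow_sub_C _ hm.ne'
  have hint : IsIntegral K α := ⟨_, hmono, haev⟩
  have hminp : minpoly K α = X ^ m - C (ℓ : K) :=
    (minpoly.eq_of_irreducible_of_monic irr haev hmono).symm
  set F' : IntermediateField K ℝ := K⟮α⟯ with hF'
  have hrank : Module.finrank K F' = m := by
    rw [IntermediateField.adjoin.finrank hint, hminp, natDegree_X_pow_sub_C]
  have hle : K ≤ F'.toSubfield := fun x hx => F'.algebraMap_mem ⟨x, hx⟩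
  refine ⟨F'.toSubfield, hle, ?_⟩
  · letI : Algebra K F'.toSubfield := (Subfield.inclusion hle).toAlgebra
    have e : F' ≃ₗ[K] F'.toSubfield :=
      { toFun := fun x => ⟨x.1, x.2⟩
        invFun := fun x => ⟨x.1, x.2⟩
        left_inv := fun x => rfl
        right_inv := fun x => rfl
        map_add' := fun x y => rfl
        map_smul' := fun k x => rfl }
    exact (e.finrank_eq.symm).trans hrank
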